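/- Let μ and ν be Borel probability measures on ℝ^d, both absolutely continuous with respect to the Lebesgue measure. Let φ, ψ : ℝ^d → ℝ be convex functions such that φ is differentiable μ-almost everywhere, ψ is differentiable ν-almost everywhere, the pushforward of μ by ∇φ equals ν, and the pushforward of ν by ∇ψ equals μ. Then ∇ψ(∇φ(x)) = x for μ-almost every x and ∇φ(∇ψ(y)) = y for ν-almost every y. -/

import Mathlib

open MeasureTheory Topology Filter Set
open scoped RealInnerProductSpace

variable {E : Type*} [NormedAddCommGroup E] [InnerProductSpace ℝ E] [CompleteSpace E]

/-- derivative of `t ↦ f (x + t • v)` at `0`. -/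
lemma line_hasDerivAt {f : E → ℝ} {x : E} (hx : DifferentiableAt ℝ f x) (v : E) :
    HasDerivAt (fun t : ℝ => f (x + t • v)) ⟪gradient f x, v⟫ 0 := by
  have hg : HasFDerivAt f (InnerProductSpace.toDual ℝ E (gradient f x))
      ((fun t : ℝ => x + t • v) 0) := by
    simpa using (hasGradientAt_iff_hasFDerivAt).1 hx.hasGradientAt
  have hl : HasDerivAt (fun t : ℝ => x + t • v) v 0 := by
    simpa using ((hasDerivAt_id (0:ℝ)).smul_const v).const_add x
  have := hg.comp_hasDerivAt (0:ℝ) hl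
  exact this

/-- subgradient inequality for convex differentiable functions. -/
lemma convexOn_subgrad {f : E → ℝ} (hf : ConvexOn ℝ Set.univ f) {x : E}
    (hx : DifferentiableAt ℝ f x) (y : E) :
    f x + ⟪gradient f x, y - x⟫ ≤ f y := by
  have hd := line_hasDerivAt hx (y - x)
  have ht : Tendsto (slope (fun t : ℝ => f (x + t • (y - x))) 0) (𝓝[>] 0)
      (𝓝 ⟪gradient f x, y - x⟫) :=
    ((hasDerivAt_iff_tendsto_slope).1 hd).mono_left (nhdsWithin_mono _ (by
      intro t ht; exact ne_of_gt ht))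
  have hbound : ∀ᶠ t in 𝓝[>] (0:ℝ), slope (fun t : ℝ => f (x + t • (y - x))) 0 t ≤ f y - f x := by
    filter_upwards [Ioc_mem_nhdsGT_of_mem (Set.left_mem_Ico.2 one_pos)] with t ht
    have h01 : (0:ℝ) < t := ht.1
    have h1 : t ≤ 1 := ht.2
    have hconv := hf.2 (Set.mem_univ x) (Set.mem_univ y) (by linarith : (0:ℝ) ≤ 1 - t)
      (le_of_lt h01) (by ring)
    have hx' : x + t • (y - x) = (1 - t) • x + t • y := by
      rw [smul_sub, sub_smul, one_smul]; abel
    rw [slope_def_field]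
    simp only [zero_smul, add_zero, sub_zero, smul_eq_mul] at *
    rw [div_le_iff₀ h01, hx']
    nlinarith [hconv]
  have := le_of_tendsto ht hbound
  linarith

/-- uniqueness of the subgradient at a differentiability point. -/
lemma subgrad_unique {f : E → ℝ} {p v : E} (hp : DifferentiableAt ℝ f p)
    (hv : ∀ y, f p + ⟪v, y - p⟫ ≤ f y) : v = gradient f p := by
  have key : ∀ u : E, ⟪v, u⟫ ≤ ⟪gradient f p, u⟫ := by
    intro u
    have hd := line_hasDerivAt hp u
    have ht : Tendsto (slope (fun t : ℝ => f (p + t • u)) 0) (𝓝[>] 0)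
        (𝓝 ⟪gradient f p, u⟫) :=
      ((hasDerivAt_iff_tendsto_slope).1 hd).mono_left (nhdsWithin_mono _ (by
        intro t ht; exact ne_of_gt ht))
    refine ge_of_tendsto ht ?_
    filter_upwards [self_mem_nhdsWithin] with t (ht : 0 < t)
    have h0 := hv (p + t • u)
    have h2 : ⟪v, p + t • u - p⟫ = t * ⟪v, u⟫ := by
      simp [real_inner_smul_right]
    rw [h2] at h0
    rw [slope_def_field]
    simp only [zero_smul, add_zero, sub_zero]
    rw [le_div_iff₀ ht, mul_comm]
    linarith
  have h1 := key (v - gradient f p)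
  have h2 : ⟪v - gradient f p, v - gradient f p⟫
      = ⟪v, v - gradient f p⟫ - ⟪gradient f p, v - gradient f p⟫ :=
    inner_sub_left _ _ _
  have h3 : ⟪v - gradient f p, v - gradient f p⟫ ≤ 0 := by rw [h2]; linarith
  have h4 : v - gradient f p = 0 := by
    have h5 : ⟪v - gradient f p, v - gradient f p⟫ = 0 :=
      le_antisymm h3 real_inner_self_nonneg
    exact inner_self_eq_zero.1 h5
  rwa [sub_eq_zero] at h4

/-- If `T` preserves `μ` and `f ∘ T ≥ f` a.e., then `f ∘ T = f` a.e. -/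
lemma ae_comp_eq_of_ae_le {α : Type*} [MeasurableSpace α] (μ : Measure α)
    [IsFiniteMeasure μ] {T : α → α} (hT : Measurable T) (hTμ : μ.map T = μ)
    {f : α → ℝ} (hf : Measurable f) (hle : ∀ᵐ x ∂μ, f x ≤ f (T x)) :
    ∀ᵐ x ∂μ, f (T x) = f x := by
  have hnull : ∀ q : ℚ, μ (T ⁻¹' {x | (q:ℝ) < f x} \ {x | (q:ℝ) < f x}) = 0 := by
    intro q
    set S : Set α := {x | (q:ℝ) < f x} with hS
    have hSm : MeasurableSet S := measurableSet_lt measurable_const hf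
    have hmap : μ (T ⁻¹' S) = μ S := by
      conv_rhs => rw [← hTμ]
      rw [Measure.map_apply hT hSm]
    have hdiff : μ (S \ T ⁻¹' S) = 0 := by
      refine measure_mono_null ?_ (ae_iff.1 hle)
      intro x hx
      simp only [Set.mem_diff, Set.mem_preimage, hS, Set.mem_setOf_eq, not_lt] at hx
      simp only [Set.mem_setOf_eq, not_le]
      exact lt_of_le_of_lt hx.2 hx.1
    have h1 : μ (T ⁻¹' S ∩ S) + μ (T ⁻¹' S \ S) = μ (T ⁻¹' S) :=
      measure_inter_add_diff _ hSm
    have h2 : μ (S ∩ T ⁻¹' S) + μ (S \ T ⁻¹' S) = μ S :=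
      measure_inter_add_diff _ (hT hSm)
    rw [hdiff, add_zero, Set.inter_comm] at h2
    rw [hmap, ← h2] at h1
    have hfin : μ (T ⁻¹' S ∩ S) ≠ ⊤ := measure_ne_top μ _
    nth_rewrite 2 [← add_zero (μ (T ⁻¹' S ∩ S))] at h1
    exact (ENNReal.add_right_inj hfin).1 h1
  have hall : ∀ᵐ x ∂μ, ∀ q : ℚ, x ∉ T ⁻¹' {y | (q:ℝ) < f y} \ {y | (q:ℝ) < f y} := by
    rw [ae_all_iff]
    intro q
    refine ae_iff.2 ?_
    refine measure_mono_null (fun x hx => ?_) (hnull q)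
    simp only [Set.mem_setOf_eq, not_not] at hx
    exact hx
  filter_upwards [hle, hall] with x h1 h2
  by_contra hne
  have hlt : f x < f (T x) := lt_of_le_of_ne h1 (Ne.symm hne)
  obtain ⟨q, hq1, hq2⟩ := exists_rat_btwn hlt
  exact h2 q ⟨by simpa using hq2, by simp [not_lt.2 (le_of_lt hq1)]⟩

lemma gradient_measurable {d : ℕ} (f : EuclideanSpace ℝ (Fin d) → ℝ) :
    Measurable (gradient f) := by
  have h1 : Measurable (fderiv ℝ f) := measurable_fderiv ℝ f
  have h2 : Continuous ((InnerProductSpace.toDual ℝ (EuclideanSpace ℝ (Fin d))).symm :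
      (EuclideanSpace ℝ (Fin d) →L[ℝ] ℝ) → EuclideanSpace ℝ (Fin d)) :=
    (InnerProductSpace.toDual ℝ _).symm.continuous
  exact h2.measurable.comp h1

lemma key_inverse {d : ℕ}
    (μ ν : Measure (EuclideanSpace ℝ (Fin d)))
    [IsProbabilityMeasure μ] [IsProbabilityMeasure ν]
    (φ ψ : EuclideanSpace ℝ (Fin d) → ℝ)
    (hφ : ConvexOn ℝ Set.univ φ) (hψ : ConvexOn ℝ Set.univ ψ)
    (hφd : ∀ᵐ x ∂μ, DifferentiableAt ℝ φ x)
    (hψd : ∀ᵐ y ∂ν, DifferentiableAt ℝ ψ y)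
    (hpush : μ.map (gradient φ) = ν) (hpush' : ν.map (gradient ψ) = μ) :
    ∀ᵐ x ∂μ, gradient ψ (gradient φ x) = x := by
  let E := EuclideanSpace ℝ (Fin d)
  have hmφ : Measurable (gradient φ) := gradient_measurable φ
  have hmψ : Measurable (gradient ψ) := gradient_measurable ψ
  set T : E → E := fun x => gradient ψ (gradient φ x) with hT
  have hmT : Measurable T := hmψ.comp hmφ
  have hTμ : μ.map T = μ := by
    have h : T = (gradient ψ) ∘ (gradient φ) := rfl
    rw [h, ← Measure.map_map hmψ hmφ, hpush, hpush']
  have hφc : Continuous φ := continuousOn_univ.1 (hφ.continuousOn isOpen_univ)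
  have hψc : Continuous ψ := continuousOn_univ.1 (hψ.continuousOn isOpen_univ)
  obtain ⟨e, he⟩ := TopologicalSpace.exists_dense_seq E
  set Ψ : E → EReal := fun x => ⨆ n, ((⟪x, e n⟫ - ψ (e n) : ℝ) : EReal) with hΨdef
  have hΨmeas : Measurable Ψ := by
    refine Measurable.iSup (fun n => ?_)
    exact Measurable.coe_real_ereal
      ((continuous_id.inner continuous_const).sub continuous_const).measurable
  have hF1 : ∀ x y : E, ((⟪x, y⟫ - ψ y : ℝ) : EReal) ≤ Ψ x := by
    intro x y
    have hc : Continuous fun z : E => ((⟪x, z⟫ - ψ z : ℝ) : EReal) :=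
      continuous_coe_real_ereal.comp ((continuous_const.inner continuous_id).sub hψc)
    have hclosed : IsClosed {z : E | ((⟪x, z⟫ - ψ z : ℝ) : EReal) ≤ Ψ x} :=
      isClosed_le hc continuous_const
    have hsub : Set.range e ⊆ {z : E | ((⟪x, z⟫ - ψ z : ℝ) : EReal) ≤ Ψ x} := by
      rintro _ ⟨n, rfl⟩
      exact le_iSup (fun n => ((⟪x, e n⟫ - ψ (e n) : ℝ) : EReal)) n
    have : y ∈ closure (Set.range e) := he y
    have := (closure_minimal hsub hclosed) this
    exact this
  have hF2 : ∀ p : E, DifferentiableAt ℝ ψ p →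
      Ψ (gradient ψ p) = ((⟪gradient ψ p, p⟫ - ψ p : ℝ) : EReal) := by
    intro p hp
    refine le_antisymm (iSup_le fun n => ?_) (hF1 _ p)
    rw [EReal.coe_le_coe_iff]
    have hs := convexOn_subgrad hψ hp (e n)
    have h1 : ⟪gradient ψ p, e n - p⟫ = ⟪gradient ψ p, e n⟫ - ⟪gradient ψ p, p⟫ :=
      inner_sub_right _ _ _
    linarith
  have hbot : ∀ x : E, Ψ x ≠ ⊥ := by
    intro x
    have h0 := le_iSup (fun n => ((⟪x, e n⟫ - ψ (e n) : ℝ) : EReal)) 0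
    intro h
    rw [show Ψ x = ⨆ n, ((⟪x, e n⟫ - ψ (e n) : ℝ) : EReal) from rfl] at h
    rw [h] at h0
    exact (EReal.bot_lt_coe _).not_ge h0
  set f : E → ℝ := fun x => φ x - (Ψ x).toReal with hfdef
  have hfmeas : Measurable f := hφc.measurable.sub hΨmeas.ereal_toReal
  -- a.e. differentiability of ψ at gradient φ x
  have h2 : ∀ᵐ x ∂μ, DifferentiableAt ℝ ψ (gradient φ x) := by
    rw [← hpush] at hψd
    exact (ae_map_iff hmφ.aemeasurable (measurableSet_of_differentiableAt ℝ ψ)).1 hψd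
  -- a.e. finiteness of Ψ
  have h3 : ∀ᵐ x ∂μ, Ψ x ≠ ⊤ := by
    rw [← hpush']
    have hWm : MeasurableSet {x : E | Ψ x ≠ ⊤} :=
      (hΨmeas (measurableSet_singleton ⊤)).compl
    refine (ae_map_iff hmψ.aemeasurable hWm).2 ?_
    filter_upwards [hψd] with y hy
    show Ψ (gradient ψ y) ≠ ⊤
    rw [hF2 y hy]
    exact EReal.coe_ne_top _
  have hle : ∀ᵐ x ∂μ, f x ≤ f (T x) := by
    filter_upwards [hφd, h2, h3] with x hx1 hx2 hx3
    set sx := gradient φ x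
    set Tx := gradient ψ sx
    have hTΨ : Ψ Tx = ((⟪Tx, sx⟫ - ψ sx : ℝ) : EReal) := hF2 sx hx2
    set r := (Ψ x).toReal with hr
    have hΨx : Ψ x = (r : EReal) := (EReal.coe_toReal hx3 (hbot x)).symm
    have hB : ⟪x, sx⟫ - ψ sx ≤ r := by
      have := hF1 x sx
      rw [hΨx, EReal.coe_le_coe_iff] at this
      exact this
    have hA : φ x + ⟪sx, Tx - x⟫ ≤ φ Tx := convexOn_subgrad hφ hx1 Tx
    have hfx : f x = φ x - r := rfl
    have hfT : f (T x) = φ Tx - (⟪Tx, sx⟫ - ψ sx) := by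
      simp only [hfdef]
      rw [show T x = Tx from rfl, hTΨ, EReal.toReal_coe]
    rw [hfx, hfT]
    have e1 : ⟪sx, Tx - x⟫ = ⟪sx, Tx⟫ - ⟪sx, x⟫ := inner_sub_right _ _ _
    have e2 : ⟪x, sx⟫ = ⟪sx, x⟫ := real_inner_comm _ _
    have e3 : ⟪Tx, sx⟫ = ⟪sx, Tx⟫ := real_inner_comm _ _
    linarith
  have heq := ae_comp_eq_of_ae_le μ hmT hTμ hfmeas hle
  filter_upwards [hφd, h2, h3, heq] with x hx1 hx2 hx3 hx4
  set sx := gradient φ x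
  set Tx := gradient ψ sx
  have hTΨ : Ψ Tx = ((⟪Tx, sx⟫ - ψ sx : ℝ) : EReal) := hF2 sx hx2
  set r := (Ψ x).toReal with hr
  have hΨx : Ψ x = (r : EReal) := (EReal.coe_toReal hx3 (hbot x)).symm
  have hB : ⟪x, sx⟫ - ψ sx ≤ r := by
    have := hF1 x sx
    rw [hΨx, EReal.coe_le_coe_iff] at this
    exact this
  have hA : φ x + ⟪sx, Tx - x⟫ ≤ φ Tx := convexOn_subgrad hφ hx1 Tx
  have hfx : f x = φ x - r := rfl
  have hfT : f (T x) = φ Tx - (⟪Tx, sx⟫ - ψ sx) := by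
    simp only [hfdef]
    rw [show T x = Tx from rfl, hTΨ, EReal.toReal_coe]
  have e1 : ⟪sx, Tx - x⟫ = ⟪sx, Tx⟫ - ⟪sx, x⟫ := inner_sub_right _ _ _
  have e2 : ⟪x, sx⟫ = ⟪sx, x⟫ := real_inner_comm _ _
  have e3 : ⟪Tx, sx⟫ = ⟪sx, Tx⟫ := real_inner_comm _ _
  -- equality forces B = 0
  have hB0 : r = ⟪x, sx⟫ - ψ sx := by
    rw [hfx, hfT] at hx4
    linarith
  -- x is a subgradient of ψ at sx
  have hsub : ∀ y : E, ψ sx + ⟪x, y - sx⟫ ≤ ψ y := by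
    intro y
    have := hF1 x y
    rw [hΨx, EReal.coe_le_coe_iff] at this
    have e4 : ⟪x, y - sx⟫ = ⟪x, y⟫ - ⟪x, sx⟫ := inner_sub_right _ _ _
    linarith
  exact (subgrad_unique hx2 hsub).symm

/-- Inversion of cyclically monotone (Brenier/McCann) transport maps: if `∇φ` pushes `μ` to `ν`
and `∇ψ` pushes `ν` to `μ`, with `φ, ψ` convex, `μ, ν` absolutely continuous probability
measures, then `∇ψ ∘ ∇φ = id` `μ`-a.e. and `∇φ ∘ ∇ψ = id` `ν`-a.e. -/
theorem gradient_inverse_of_transport {d : ℕ}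
    (μ ν : Measure (EuclideanSpace ℝ (Fin d)))
    [IsProbabilityMeasure μ] [IsProbabilityMeasure ν]
    (hμ : μ ≪ volume) (hν : ν ≪ volume)
    (φ ψ : EuclideanSpace ℝ (Fin d) → ℝ)
    (hφ : ConvexOn ℝ Set.univ φ) (hψ : ConvexOn ℝ Set.univ ψ)
    (hφd : ∀ᵐ x ∂μ, DifferentiableAt ℝ φ x)
    (hψd : ∀ᵐ y ∂ν, DifferentiableAt ℝ ψ y)
    (hpush : μ.map (gradient φ) = ν) (hpush' : ν.map (gradient ψ) = μ) :
    (∀ᵐ x ∂μ, gradient ψ (gradient φ x) = x) ∧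
    (∀ᵐ y ∂ν, gradient φ (gradient ψ y) = y) :=
  ⟨key_inverse μ ν φ ψ hφ hψ hφd hψd hpush hpush',
   key_inverse ν μ ψ φ hψ hφ hψd hφd hpush' hpush⟩
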